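/- arXiv:2301.09839 — 2 statements merged into one kernel-verified Lean document; each statement's English description precedes it below -/
import Mathlib

section
/- Let r ≥ 1, let C be a type of clients, let σ : Fin r → C assign to each backup slot the writer whose compare-and-swap succeeded on it, and let v : C → ℕ be injective (writers propose pairwise-distinct values). Define Maj c := 2 · |{i : Fin r | σ i = c}| > r, and define Win c := Maj c ∨ ((∀ c', ¬ Maj c') ∧ c is in the range of σ ∧ ∀ c' in the range of σ, v c ≤ v c'). Then there exists exactly one client c with Win c. That is, the SNAPSHOT conflict-resolution rules always decide exactly one last writer among the conflicting writers of a write round. -/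
/-- SNAPSHOT conflict-resolution rules decide exactly one last writer:
a writer wins if it modified a strict majority of backup slots (Rules 1/2),
or, when no writer holds a strict majority, if it wrote the minimal value
among values written into the backup slots (Rule 3). -/
theorem snapshot_exactly_one_winner
    {C : Type*} [DecidableEq C] {r : ℕ} (hr : 1 ≤ r)
    (σ : Fin r → C) (v : C → ℕ) (hv : Function.Injective v) :
    ∃! c : C,
      (2 * (Finset.univ.filter (fun i : Fin r => σ i = c)).card > r) ∨
      ((∀ c' : C, ¬ (2 * (Finset.univ.filter (fun i : Fin r => σ i = c')).card > r)) ∧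
        c ∈ Set.range σ ∧ ∀ c' ∈ Set.range σ, v c ≤ v c') := by
  classical
  have majUniq : ∀ c c' : C,
      2 * (Finset.univ.filter (fun i : Fin r => σ i = c)).card > r →
      2 * (Finset.univ.filter (fun i : Fin r => σ i = c')).card > r → c = c' := by
    intro c c' hc hc'
    by_contra hne
    have hdisj : Disjoint (Finset.univ.filter (fun i : Fin r => σ i = c))
        (Finset.univ.filter (fun i : Fin r => σ i = c')) := by
      simp only [Finset.disjoint_left, Finset.mem_filter]
      rintro i ⟨-, h1⟩ ⟨-, h2⟩
      exact hne (h1 ▸ h2 ▸ rfl)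
    have hle : (Finset.univ.filter (fun i : Fin r => σ i = c)).card +
        (Finset.univ.filter (fun i : Fin r => σ i = c')).card ≤ r := by
      calc _ = ((Finset.univ.filter (fun i : Fin r => σ i = c)) ∪
            (Finset.univ.filter (fun i : Fin r => σ i = c'))).card :=
            (Finset.card_union_of_disjoint hdisj).symm
        _ ≤ (Finset.univ : Finset (Fin r)).card := Finset.card_le_card (Finset.subset_univ _)
        _ = r := Finset.card_univ.trans (Fintype.card_fin r)
    omega
  by_cases h : ∃ c, 2 * (Finset.univ.filter (fun i : Fin r => σ i = c)).card > r
  · obtain ⟨c, hc⟩ := h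
    refine ⟨c, Or.inl hc, ?_⟩
    rintro y (hy | ⟨hno, -⟩)
    · exact majUniq y c hy hc
    · exact absurd hc (hno c)
  · push_neg at h
    have hS : (Finset.univ.image σ).Nonempty := by
      refine ⟨σ ⟨0, hr⟩, Finset.mem_image_of_mem σ (Finset.mem_univ _)⟩
    obtain ⟨c, hcS, hcmin⟩ := Finset.exists_min_image (Finset.univ.image σ) v hS
    have hrange : ∀ x, x ∈ Set.range σ ↔ x ∈ Finset.univ.image σ := by
      intro x; simp [Set.mem_range, eq_comm]
    refine ⟨c, Or.inr ⟨fun c' h' => absurd h' (not_lt.mpr (h c')),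
      (hrange c).mpr hcS, fun c' hc' => hcmin c' ((hrange c').mp hc')⟩, ?_⟩
    rintro y (hy | ⟨-, hyr, hymin⟩)
    · exact absurd hy (not_lt.mpr (h y))
    · exact hv (le_antisymm (hymin c ((hrange c).mpr hcS)) (hcmin y ((hrange y).mp hyr)))
end

section
/- Fix v₀ : ℕ and define step : ℕ → ℕ → ℕ by step s p = if s = v₀ then p else s, modeling a compare-and-swap with expected value v₀. Let l be a nonempty list of proposed values, each different from v₀ (∀ p ∈ l, p ≠ v₀). Then for every k with 1 ≤ k ≤ length l, folding step over the first k elements of l starting from v₀ yields the head of l: (l.take k).foldl step v₀ = l.head. In particular the slot's value is changed exactly once, by the first CAS in the sequence, and all later CAS operations fail. -/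
private lemma cas_fold_stuck (v₀ s : ℕ) (hs : s ≠ v₀) (t : List ℕ) :
    t.foldl (fun s p => if s = v₀ then p else s) s = s := by
  induction t with
  | nil => rfl
  | cons a t ih => simpa [List.foldl_cons, if_neg hs] using ih

/-- A backup slot whose value evolves by compare-and-swap with common expected
value `v₀` and proposed values all different from `v₀` is modified exactly
once, by the first CAS in the sequence. -/
theorem cas_modifies_once
    (v₀ : ℕ) (l : List ℕ) (hne : l ≠ [])
    (hl : ∀ p ∈ l, p ≠ v₀) :
    ∀ k, 1 ≤ k → k ≤ l.length →
      (l.take k).foldl (fun s p => if s = v₀ then p else s) v₀ = l.head hne := by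
  intro k hk1 hk2
  obtain ⟨h, t, rfl⟩ := List.exists_cons_of_ne_nil hne
  obtain ⟨m, rfl⟩ := Nat.exists_eq_add_of_le hk1
  have hh : h ≠ v₀ := hl h List.mem_cons_self
  rw [Nat.add_comm]
  simp [List.take_succ_cons, List.foldl_cons, if_pos rfl, cas_fold_stuck v₀ h hh]
end
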